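/- For 0 < |q| < 1 and x ≠ 0, the theta function θ(x) := (1/(q;q)_∞) · ∑_{n=-∞}^∞ (-1)^n q^{n(n-1)/2} x^n satisfies the Jacobi triple product identity θ(x) = (x; q)_∞ · (q/x; q)_∞. -/

import Mathlib

noncomputable def qp (q x : ℂ) : ℂ := ∏' n : ℕ, (1 - x * q ^ n)

noncomputable def qpInt (q x : ℂ) (n : ℤ) : ℂ := qp q x / qp q (x * q ^ n)

noncomputable def qpFin (q x : ℂ) (n : ℕ) : ℂ := ∏ j ∈ Finset.range n, (1 - x * q ^ j)

noncomputable def theta (q x : ℂ) : ℂ := qp q x * qp q (q / x)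

namespace JTP

open Finset Filter Complex

noncomputable def Cq (q : ℂ) (m k : ℕ) : ℂ := qpFin q q m / (qpFin q q k * qpFin q q (m - k))

lemma qpFin_succ (q x : ℂ) (n : ℕ) : qpFin q x (n+1) = qpFin q x n * (1 - x * q ^ n) :=
  Finset.prod_range_succ _ _

lemma factor_ne_zero {q : ℂ} (hq1 : ‖q‖ < 1) (j : ℕ) : 1 - q * q ^ j ≠ 0 := by
  intro h
  have h1 : q * q ^ j = 1 := by linear_combination -h
  have : ‖q * q ^ j‖ < 1 := by
    rw [norm_mul, norm_pow]
    calc ‖q‖ * ‖q‖ ^ j ≤ ‖q‖ * 1 := by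
          apply mul_le_mul_of_nonneg_left (pow_le_one₀ (norm_nonneg _) hq1.le) (norm_nonneg _)
      _ = ‖q‖ := by ring
      _ < 1 := hq1
  rw [h1] at this; simp at this

lemma qpFin_q_ne_zero {q : ℂ} (hq1 : ‖q‖ < 1) (m : ℕ) : qpFin q q m ≠ 0 := by
  apply Finset.prod_ne_zero_iff.2
  intro j _
  exact factor_ne_zero hq1 j

lemma qpFin_zero (q x : ℂ) : qpFin q x 0 = 1 := by simp [qpFin]

lemma Cq_zero {q : ℂ} (hq1 : ‖q‖ < 1) (m : ℕ) : Cq q m 0 = 1 := by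
  rw [Cq, Nat.sub_zero, qpFin_zero, one_mul, div_self (qpFin_q_ne_zero hq1 m)]

lemma Cq_self {q : ℂ} (hq1 : ‖q‖ < 1) (m : ℕ) : Cq q m m = 1 := by
  rw [Cq, Nat.sub_self, qpFin_zero, mul_one, div_self (qpFin_q_ne_zero hq1 m)]

lemma Cq_pascal {q : ℂ} (hq1 : ‖q‖ < 1) (a b : ℕ) :
    Cq q (a+b+2) (a+1) = q^(a+1) * Cq q (a+b+1) (a+1) + Cq q (a+b+1) a := by
  have e1 : (a+b+2) - (a+1) = b+1 := by omega
  have e2 : (a+b+1) - (a+1) = b := by omega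
  have e3 : (a+b+1) - a = b+1 := by omega
  rw [Cq, Cq, Cq, e1, e2, e3]
  rw [show a+b+2 = (a+b+1)+1 by ring, qpFin_succ, qpFin_succ q q b,
    show a+1 = a+1 by rfl, qpFin_succ q q a]
  have h1 := qpFin_q_ne_zero hq1 (a+b+1)
  have h2 := qpFin_q_ne_zero hq1 (a+1)
  have h3 := qpFin_q_ne_zero hq1 a
  have h4 := qpFin_q_ne_zero hq1 b
  have h5 := factor_ne_zero hq1 a
  have h6 := factor_ne_zero hq1 b
  rw [qpFin_succ q q a] at h2
  field_simp
  ring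

lemma Tnat_succ (j : ℕ) : (j+1)*j/2 = j*(j-1)/2 + j := by
  have h : (j+1)*j = j*(j-1) + 2*j := by
    cases j with
    | zero => rfl
    | succ k => simp [Nat.succ_sub_one]; ring
  rw [h, Nat.add_mul_div_left _ _ (by norm_num : 0 < 2)]

lemma gauss {q : ℂ} (hq1 : ‖q‖ < 1) : ∀ (m : ℕ) (x : ℂ),
    qpFin q x m = ∑ k ∈ Finset.range (m+1), (-1)^k * q^(k*(k-1)/2) * Cq q m k * x^k := by
  intro m
  induction m with
  | zero => intro x; simp [qpFin, Cq_zero hq1]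
  | succ m ih =>
    intro x
    have h1 : qpFin q x (m+1) = (1 - x) * qpFin q (x*q) m := by
      rw [qpFin, Finset.prod_range_succ', qpFin, mul_comm]
      congr 1
      · simp
      · apply Finset.prod_congr rfl; intro j _; ring
    rw [h1, ih (x*q)]
    -- expand (1-x) * sum = sum - x*sum
    rw [one_sub_mul, Finset.mul_sum]
    -- LHS goal: peel first term of range (m+2) sum
    rw [Finset.sum_range_succ' (fun k => (-1:ℂ)^k * q^(k*(k-1)/2) * Cq q (m+1) k * x^k) (m+1)]
    -- peel first term of the first sum on RHS
    rw [Finset.sum_range_succ' (fun k => (-1:ℂ)^k * q^(k*(k-1)/2) * Cq q m k * (x*q)^k) m]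
    -- peel last of x*sum : sum over range (m+1)
    rw [Finset.sum_range_succ (fun k => x * ((-1:ℂ)^k * q^(k*(k-1)/2) * Cq q m k * (x*q)^k)) m]
    -- peel last of LHS inner sum over range (m+1)
    rw [Finset.sum_range_succ (fun k => (-1:ℂ)^(k+1) * q^((k+1)*(k+1-1)/2) * Cq q (m+1) (k+1) * x^(k+1)) m]
    simp only [Cq_zero hq1, Cq_self hq1]
    have key : ∀ j ∈ Finset.range m,
        (-1:ℂ)^(j+1) * q^((j+1)*(j+1-1)/2) * Cq q (m+1) (j+1) * x^(j+1)
          = (-1)^(j+1) * q^((j+1)*(j+1-1)/2) * Cq q m (j+1) * (x*q)^(j+1)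
            - x * ((-1)^j * q^(j*(j-1)/2) * Cq q m j * (x*q)^j) := by
      intro j hj
      obtain ⟨b, hb⟩ := Nat.exists_eq_add_of_lt (Finset.mem_range.1 hj)
      have hp := Cq_pascal hq1 j b
      rw [show j + b + 2 = m + 1 by omega, show j + b + 1 = m by omega] at hp
      rw [hp]
      have ht : (j+1)*(j+1-1)/2 = j*(j-1)/2 + j := by
        rw [Nat.add_sub_cancel]; exact Tnat_succ j
      rw [ht]
      ring
    rw [Finset.sum_congr rfl key, Finset.sum_sub_distrib]
    have ht2 : (m+1)*(m+1-1)/2 = m*(m-1)/2 + m := by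
      rw [Nat.add_sub_cancel]; exact Tnat_succ m
    rw [ht2]
    ring

lemma two_mul_Tz (n : ℤ) : 2*(n*(n-1)/2) = n*(n-1) := by
  apply Int.mul_ediv_cancel'
  have h : Even ((n-1)*(n-1+1)) := Int.even_mul_succ_self (n-1)
  have h2 : (n-1)*(n-1+1) = n*(n-1) := by ring
  rw [h2] at h
  exact h.two_dvd

lemma Tz_add (a b : ℤ) : (a+b)*((a+b)-1)/2 = a*(a-1)/2 + b*(b-1)/2 + a*b := by
  apply mul_left_cancel₀ (two_ne_zero : (2:ℤ) ≠ 0)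
  rw [two_mul_Tz, mul_add, mul_add, two_mul_Tz, two_mul_Tz]
  ring

lemma cast_T (m : ℕ) : ((m*(m-1)/2 : ℕ) : ℤ) = (m:ℤ)*((m:ℤ)-1)/2 := by
  cases m with
  | zero => simp
  | succ k =>
    have hdvd : 2 ∣ (k+1)*k := by
      have := (Int.even_mul_succ_self (k:ℤ)).natAbs
      have h : Even (k*(k+1)) := Nat.even_mul_succ_self k
      exact (by rwa [mul_comm] at h : Even ((k+1)*k)).two_dvd
    have hh : ((k+1)*k/2 : ℕ)*2 = (k+1)*k := Nat.div_mul_cancel hdvd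
    have hh' : ((k:ℤ)+1)*(k:ℤ) = ((((k+1)*k/2 : ℕ)) : ℤ) * 2 := by exact_mod_cast hh.symm
    rw [Nat.add_sub_cancel]
    push_cast
    rw [show ((k:ℤ)+1-1) = (k:ℤ) by ring, hh', Int.mul_ediv_cancel _ two_ne_zero]

lemma prod_split {q x : ℂ} (hq : q ≠ 0) (hx : x ≠ 0) (m : ℕ) :
    qpFin q (x * q^(-(m:ℤ))) (2*m)
      = ((-1)^m * x^m * q^(m*(m-1)/2) * (q^(m*m))⁻¹) * (qpFin q x m * qpFin q (q/x) m) := by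
  rw [qpFin, two_mul, Finset.prod_range_add]
  have hblock2 : ∀ j ∈ Finset.range m, (1 - x * q^(-(m:ℤ)) * q^(m+j)) = 1 - x * q^j := by
    intro j _
    congr 1
    rw [mul_assoc]
    congr 1
    rw [← zpow_natCast q (m+j), ← zpow_natCast q j, ← zpow_add₀ hq]
    congr 1
    push_cast; ring
  rw [Finset.prod_congr rfl hblock2]
  have hblock1 : ∀ j ∈ Finset.range m,
      (1 - x * q^(-(m:ℤ)) * q^j) = (-x * (q^j * (q^m)⁻¹)) * (1 - (q/x) * q^(m-1-j)) := by
    intro j hj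
    have hj' := Finset.mem_range.1 hj
    obtain ⟨t, ht⟩ : ∃ t, m = j + 1 + t := ⟨m-1-j, by omega⟩
    subst ht
    have h1 : j+1+t-1-j = t := by omega
    rw [h1, zpow_neg, zpow_natCast]
    have hqm : (q:ℂ)^(j+1+t) ≠ 0 := pow_ne_zero _ hq
    field_simp
    ring
  rw [Finset.prod_congr rfl hblock1, Finset.prod_mul_distrib]
  have hrefl : ∏ j ∈ Finset.range m, (1 - (q/x) * q^(m-1-j)) = qpFin q (q/x) m := by
    rw [qpFin]
    exact Finset.prod_range_reflect (fun j => 1 - (q/x) * q^j) m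
  rw [hrefl]
  have hfirst : ∏ j ∈ Finset.range m, (-x * (q^j * (q^m)⁻¹))
      = (-1)^m * x^m * q^(m*(m-1)/2) * (q^(m*m))⁻¹ := by
    rw [Finset.prod_mul_distrib, Finset.prod_mul_distrib]
    rw [Finset.prod_const, Finset.prod_const, Finset.prod_pow_eq_pow_sum, Finset.card_range]
    have hsum : ∑ i ∈ Finset.range m, i = m*(m-1)/2 := by
      have := Finset.sum_range_id_mul_two m
      omega
    rw [hsum, ← inv_pow, ← pow_mul, show (-x) = (-1)*x from by ring, mul_pow]
    ring
  rw [hfirst, show (∏ j ∈ Finset.range m, (1 - x * q^j)) = qpFin q x m from rfl]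
  ring

lemma sum_reindex {q x : ℂ} (hq : q ≠ 0) (hx : x ≠ 0) (m : ℕ) :
    ∑ k ∈ Finset.range (2*m+1), (-1:ℂ)^k * q^(k*(k-1)/2) * Cq q (2*m) k * (x * q^(-(m:ℤ)))^k
      = ((-1)^m * x^m * q^(m*(m-1)/2) * (q^(m*m))⁻¹) *
        ∑ n ∈ Finset.Icc (-(m:ℤ)) (m:ℤ),
          (-1:ℂ)^n * q^(n*(n-1)/2) * Cq q (2*m) (n+m).toNat * x^n := by
  rw [Finset.mul_sum]
  refine Finset.sum_nbij' (i := fun k => (k:ℤ) - m) (j := fun n => (n+m).toNat) ?_ ?_ ?_ ?_ ?_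
  · intro k hk; have := Finset.mem_range.1 hk; simp only [Finset.mem_Icc]; omega
  · intro n hn; have := Finset.mem_Icc.1 hn; simp only [Finset.mem_range]; omega
  · intro k hk; have := Finset.mem_range.1 hk; omega
  · intro n hn; have := Finset.mem_Icc.1 hn; omega
  · intro k hk
    have hkk := Finset.mem_range.1 hk
    set n : ℤ := (k:ℤ) - m with hn
    have htn : ((k:ℤ) - ↑m + ↑m).toNat = k := by omega
    have hkz : (k:ℤ) = n + m := by omega
    rw [htn]
    have hm1 : (-1:ℂ) ≠ 0 := by norm_num
    have ha : (-1:ℂ)^n = (-1)^k * ((-1:ℂ)^m)⁻¹ := by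
      rw [hn, zpow_sub₀ hm1, zpow_natCast, zpow_natCast, div_eq_mul_inv]
    have hx' : x^n = x^k * ((x:ℂ)^m)⁻¹ := by
      rw [hn, zpow_sub₀ hx, zpow_natCast, zpow_natCast, div_eq_mul_inv]
    have hb : (q^(-(m:ℤ)))^k = (q^(m*k))⁻¹ := by
      rw [zpow_neg, zpow_natCast, inv_pow, ← pow_mul]
    have hqpart : q^(k*(k-1)/2 : ℕ) * q^(m*m) = q^(m*(m-1)/2 : ℕ) * q^(n*(n-1)/2) * q^(m*k) := by
      rw [← zpow_natCast q (k*(k-1)/2), ← zpow_natCast q (m*k), ← zpow_natCast q (m*(m-1)/2),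
        ← zpow_natCast q (m*m), ← zpow_add₀ hq, ← zpow_add₀ hq, ← zpow_add₀ hq]
      congr 1
      rw [cast_T k, cast_T m]
      push_cast
      rw [hkz]
      linear_combination Tz_add n m
    rw [ha, hx', mul_pow, hb]
    have hqm : (q:ℂ)^(m*m) ≠ 0 := pow_ne_zero _ hq
    have hqmk : (q:ℂ)^(m*k) ≠ 0 := pow_ne_zero _ hq
    have hxm : (x:ℂ)^m ≠ 0 := pow_ne_zero _ hx
    have hmm : ((-1:ℂ))^m ≠ 0 := pow_ne_zero _ hm1
    field_simp
    linear_combination (Cq q (2*m) k) * hqpart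

lemma star {q x : ℂ} (hq : q ≠ 0) (hq1 : ‖q‖ < 1) (hx : x ≠ 0) (m : ℕ) :
    qpFin q x m * qpFin q (q/x) m
      = ∑ n ∈ Finset.Icc (-(m:ℤ)) (m:ℤ),
          (-1:ℂ)^n * q^(n*(n-1)/2) * Cq q (2*m) (n+m).toNat * x^n := by
  have hg := gauss hq1 (2*m) (x * q^(-(m:ℤ)))
  rw [prod_split hq hx m, sum_reindex hq hx m] at hg
  have hP : ((-1:ℂ)^m * x^m * q^(m*(m-1)/2) * (q^(m*m))⁻¹) ≠ 0 := by
    apply mul_ne_zero (mul_ne_zero (mul_ne_zero (pow_ne_zero _ (by norm_num)) (pow_ne_zero _ hx))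
      (pow_ne_zero _ hq)) (inv_ne_zero (pow_ne_zero _ hq))
  exact mul_left_cancel₀ hP hg

lemma tendsto_qpFin {q : ℂ} (hq1 : ‖q‖ < 1) (y : ℂ) :
    Filter.Tendsto (fun m => qpFin q y m) atTop (nhds (qp q y)) := by
  by_cases hzero : ∃ n, 1 - y * q^n = 0
  · obtain ⟨n0, hn0⟩ := hzero
    have hp : HasProd (fun n : ℕ => 1 - y*q^n) 0 := by
      rw [HasProd]
      apply Filter.Tendsto.congr' _ tendsto_const_nhds
      filter_upwards [Filter.eventually_ge_atTop ({n0} : Finset ℕ)] with s hs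
      exact (Finset.prod_eq_zero (hs (Finset.mem_singleton_self n0)) hn0).symm
    have hqp : qp q y = 0 := hp.tprod_eq
    rw [hqp]
    apply Filter.Tendsto.congr' _ tendsto_const_nhds
    filter_upwards [Filter.eventually_ge_atTop (n0+1)] with m hm
    exact (Finset.prod_eq_zero (Finset.mem_range.2 (by omega)) hn0).symm
  · push_neg at hzero
    have hlog : Summable (fun n : ℕ => Complex.log (1 - y*q^n)) := by
      apply Summable.of_norm
      have hgeo : Summable (fun n : ℕ => 3/2 * ‖y‖ * ‖q‖^n) :=
        (summable_geometric_of_lt_one (norm_nonneg q) hq1).mul_left _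
      apply Summable.of_norm_bounded_eventually_nat hgeo
      have htend : Filter.Tendsto (fun n : ℕ => ‖y‖ * ‖q‖^n) atTop (nhds 0) := by
        simpa using (tendsto_pow_atTop_nhds_zero_of_lt_one (norm_nonneg q) hq1).const_mul ‖y‖
      filter_upwards [htend.eventually (gt_mem_nhds (by norm_num : (0:ℝ) < 1/2))] with n hn
      have hb : ‖-(y * q^n)‖ ≤ 1/2 := by
        rw [norm_neg, norm_mul, norm_pow]; exact hn.le
      have := Complex.norm_log_one_add_half_le_self hb
      rw [show (1 : ℂ) + -(y * q^n) = 1 - y * q^n by ring] at this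
      calc ‖‖Complex.log (1 - y*q^n)‖‖ = ‖Complex.log (1 - y*q^n)‖ := by
            rw [Real.norm_of_nonneg (norm_nonneg _)]
        _ ≤ 3/2 * ‖-(y * q^n)‖ := this
        _ = 3/2 * ‖y‖ * ‖q‖^n := by rw [norm_neg, norm_mul, norm_pow]; ring
    have hmult : Multipliable (fun n : ℕ => 1 - y*q^n) :=
      Complex.multipliable_of_summable_log hlog
    exact hmult.hasProd.tendsto_prod_nat

lemma geom_partial_le {r : ℝ} (h0 : 0 ≤ r) (h1 : r < 1) (m : ℕ) :
    ∑ j ∈ Finset.range m, r^(j+1) ≤ r/(1-r) := by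
  have hsum : ∀ j ∈ Finset.range m, r^(j+1) = r * r^j := fun j _ => by ring
  rw [Finset.sum_congr rfl hsum, ← Finset.mul_sum]
  have h2 : ∑ j ∈ Finset.range m, r^j ≤ (1-r)⁻¹ := by
    apply Summable.sum_le_tsum _ (fun i _ => pow_nonneg h0 i) (summable_geometric_of_lt_one h0 h1)
      |>.trans
    rw [tsum_geometric_of_lt_one h0 h1]
  rw [div_eq_mul_inv]
  exact mul_le_mul_of_nonneg_left h2 h0

lemma qpFin_q_upper {q : ℂ} (hq1 : ‖q‖ < 1) (m : ℕ) :
    ‖qpFin q q m‖ ≤ Real.exp (‖q‖/(1-‖q‖)) := by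
  rw [qpFin, norm_prod]
  calc ∏ j ∈ Finset.range m, ‖1 - q * q^j‖ ≤ ∏ j ∈ Finset.range m, Real.exp (‖q‖^(j+1)) := by
        apply Finset.prod_le_prod (fun j _ => norm_nonneg _)
        intro j _
        calc ‖1 - q * q^j‖ ≤ ‖(1:ℂ)‖ + ‖q * q^j‖ := norm_sub_le _ _
          _ = 1 + ‖q‖^(j+1) := by rw [norm_one, norm_mul, norm_pow, pow_succ]; ring
          _ ≤ Real.exp (‖q‖^(j+1)) := by
              have := Real.add_one_le_exp (‖q‖^(j+1)); linarith
    _ = Real.exp (∑ j ∈ Finset.range m, ‖q‖^(j+1)) := by rw [Real.exp_sum]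
    _ ≤ Real.exp (‖q‖/(1-‖q‖)) :=
        Real.exp_le_exp.2 (geom_partial_le (norm_nonneg q) hq1 m)

lemma one_sub_ge_exp {t a : ℝ} (h0 : 0 ≤ t) (hta : t ≤ a) (ha : a < 1) :
    Real.exp (-(t/(1-a))) ≤ 1 - t := by
  set s := t/(1-a) with hs
  have ha1 : 0 < 1 - a := by linarith
  have hs0 : 0 ≤ s := div_nonneg h0 ha1.le
  have h1 : 1 + s ≤ Real.exp s := by have := Real.add_one_le_exp s; linarith
  have hpos : (0:ℝ) < 1 + s := by linarith
  rw [Real.exp_neg]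
  have h2 : (Real.exp s)⁻¹ ≤ (1 + s)⁻¹ := by
    apply inv_anti₀ hpos h1
  apply h2.trans
  rw [inv_le_iff_one_le_mul₀ hpos]
  have hst : s * (1-a) = t := by rw [hs]; field_simp
  nlinarith [mul_nonneg h0 (sub_nonneg.2 hta)]

lemma qpFin_q_lower {q : ℂ} (hq1 : ‖q‖ < 1) (m : ℕ) :
    Real.exp (-(‖q‖/(1-‖q‖)^2)) ≤ ‖qpFin q q m‖ := by
  have h0 := norm_nonneg q
  have ha1 : (0:ℝ) < 1 - ‖q‖ := by linarith
  rw [qpFin, norm_prod]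
  calc Real.exp (-(‖q‖/(1-‖q‖)^2))
      ≤ Real.exp (-((∑ j ∈ Finset.range m, ‖q‖^(j+1))/(1-‖q‖))) := by
        apply Real.exp_le_exp.2
        rw [neg_le_neg_iff, div_le_div_iff₀ ha1 (by positivity)]
        have := geom_partial_le h0 hq1 m
        calc (∑ j ∈ Finset.range m, ‖q‖^(j+1)) * (1-‖q‖)^2
            ≤ (‖q‖/(1-‖q‖)) * (1-‖q‖)^2 := by
              apply mul_le_mul_of_nonneg_right this (by positivity)
          _ = ‖q‖ * (1-‖q‖) := by
              rw [div_mul_eq_mul_div, pow_two, ← mul_assoc, mul_div_assoc,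
                div_self (ne_of_gt ha1), mul_one]
    _ = ∏ j ∈ Finset.range m, Real.exp (-(‖q‖^(j+1)/(1-‖q‖))) := by
        rw [← Real.exp_sum]
        congr 1
        rw [Finset.sum_div, ← Finset.sum_neg_distrib]
    _ ≤ ∏ j ∈ Finset.range m, ‖1 - q * q^j‖ := by
        apply Finset.prod_le_prod (fun j _ => (Real.exp_pos _).le)
        intro j _
        have hle : ‖q‖^(j+1) ≤ ‖q‖ := by
          calc ‖q‖^(j+1) = ‖q‖ * ‖q‖^j := by rw [pow_succ]; ring
            _ ≤ ‖q‖ * 1 := mul_le_mul_of_nonneg_left (pow_le_one₀ h0 hq1.le) h0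
            _ = ‖q‖ := mul_one _
        calc Real.exp (-(‖q‖^(j+1)/(1-‖q‖))) ≤ 1 - ‖q‖^(j+1) :=
              one_sub_ge_exp (pow_nonneg h0 _) hle hq1
          _ = ‖(1:ℂ)‖ - ‖q * q^j‖ := by rw [norm_one, norm_mul, norm_pow, pow_succ]; ring
          _ ≤ ‖1 - q * q^j‖ := norm_sub_norm_le _ _

lemma qp_q_norm_lower {q : ℂ} (hq1 : ‖q‖ < 1) :
    Real.exp (-(‖q‖/(1-‖q‖)^2)) ≤ ‖qp q q‖ :=
  le_of_tendsto_of_tendsto' tendsto_const_nhds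
    ((tendsto_qpFin hq1 q).norm) (fun m => qpFin_q_lower hq1 m)

lemma qp_q_ne_zero {q : ℂ} (hq1 : ‖q‖ < 1) : qp q q ≠ 0 := by
  intro h
  have := qp_q_norm_lower hq1
  rw [h, norm_zero] at this
  exact absurd this (not_le.2 (Real.exp_pos _))

lemma Cq_norm_le {q : ℂ} (hq1 : ‖q‖ < 1) (M k : ℕ) :
    ‖Cq q M k‖ ≤ Real.exp (‖q‖/(1-‖q‖)) / (Real.exp (-(‖q‖/(1-‖q‖)^2)))^2 := by
  have hc : (0:ℝ) < Real.exp (-(‖q‖/(1-‖q‖)^2)) := Real.exp_pos _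
  rw [Cq, norm_div, norm_mul]
  apply div_le_div₀ (by positivity) (qpFin_q_upper hq1 M)
    (by positivity)
  calc (Real.exp (-(‖q‖/(1-‖q‖)^2)))^2
      = Real.exp (-(‖q‖/(1-‖q‖)^2)) * Real.exp (-(‖q‖/(1-‖q‖)^2)) := sq _
    _ ≤ ‖qpFin q q k‖ * ‖qpFin q q (M-k)‖ :=
        mul_le_mul (qpFin_q_lower hq1 k) (qpFin_q_lower hq1 (M-k)) hc.le (norm_nonneg _)

lemma tendsto_Cq {q : ℂ} (hq1 : ‖q‖ < 1) (n : ℤ) :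
    Filter.Tendsto (fun m : ℕ => Cq q (2*m) ((n + m).toNat)) atTop (nhds (qp q q)⁻¹) := by
  have hqp := qp_q_ne_zero hq1
  have base := tendsto_qpFin hq1 q
  have h1 : Filter.Tendsto (fun m : ℕ => qpFin q q (2*m)) atTop (nhds (qp q q)) :=
    base.comp (Filter.tendsto_atTop_mono (fun m => by simp only [id_eq]; omega)
      Filter.tendsto_id)
  have h2 : Filter.Tendsto (fun m : ℕ => qpFin q q ((n + m).toNat)) atTop (nhds (qp q q)) := by
    apply base.comp
    apply Filter.tendsto_atTop_mono (f := fun m : ℕ => m - n.natAbs)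
      (fun m => by change m - n.natAbs ≤ _; omega)
    exact Filter.tendsto_sub_atTop_nat _
  have h3 : Filter.Tendsto (fun m : ℕ => qpFin q q (2*m - (n + m).toNat)) atTop
      (nhds (qp q q)) := by
    apply base.comp
    apply Filter.tendsto_atTop_mono (f := fun m : ℕ => m - n.natAbs)
      (fun m => by change m - n.natAbs ≤ _; omega)
    exact Filter.tendsto_sub_atTop_nat _
  have := h1.div (h2.mul h3) (mul_ne_zero hqp hqp)
  have heq : qp q q / (qp q q * qp q q) = (qp q q)⁻¹ := by field_simp
  rw [heq] at this
  exact this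

lemma summable_aux (c r s : ℝ) (d : ℕ) (h0 : 0 ≤ r) (h1 : r < 1) (hs : 0 ≤ s) :
    Summable (fun n : ℕ => c * r^(n*(n-1)/2 + d*n) * s^n) := by
  apply summable_of_ratio_norm_eventually_le (r := 1/2) (by norm_num)
  have htend : Filter.Tendsto (fun n : ℕ => r^(n+d) * s) atTop (nhds 0) := by
    simpa using ((tendsto_pow_atTop_nhds_zero_of_lt_one h0 h1).comp
      (Filter.tendsto_add_atTop_nat d)).mul_const s
  filter_upwards [htend.eventually (gt_mem_nhds (by norm_num : (0:ℝ) < 1/2))] with n hn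
  have he : (n+1)*(n+1-1)/2 + d*(n+1) = (n*(n-1)/2 + d*n) + (n + d) := by
    rw [Nat.add_sub_cancel, Tnat_succ]; ring
  rw [he, show c * r^((n*(n-1)/2 + d*n) + (n+d)) * s^(n+1)
      = (c * r^(n*(n-1)/2 + d*n) * s^n) * (r^(n+d)*s) from by rw [pow_add, pow_succ]; ring]
  rw [norm_mul, Real.norm_of_nonneg (show (0:ℝ) ≤ r^(n+d)*s by positivity)]
  calc ‖c * r^(n*(n-1)/2 + d*n) * s^n‖ * (r^(n+d)*s)
      ≤ ‖c * r^(n*(n-1)/2 + d*n) * s^n‖ * (1/2) :=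
        mul_le_mul_of_nonneg_left hn.le (norm_nonneg _)
    _ = 1/2 * ‖c * r^(n*(n-1)/2 + d*n) * s^n‖ := mul_comm _ _

lemma summable_bound (c r s : ℝ) (h0 : 0 ≤ r) (h1 : r < 1) (hs : 0 < s) :
    Summable (fun n : ℤ => c * r^((n*(n-1)/2).toNat) * s^n) := by
  apply Summable.of_nat_of_neg
  · apply (summable_aux c r s 0 h0 h1 hs.le).congr
    intro n
    have he : (((n:ℤ)*((n:ℤ)-1)/2).toNat) = n*(n-1)/2 + 0*n := by
      rw [← cast_T n, Int.toNat_natCast, zero_mul, add_zero]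
    rw [he, zpow_natCast]
  · apply (summable_aux c r s⁻¹ 1 h0 h1 (by positivity)).congr
    intro n
    have h1' : ((-n:ℤ))*((-n:ℤ)-1)/2 = (((n+1:ℕ)):ℤ)*((((n+1:ℕ)):ℤ)-1)/2 := by
      congr 1; push_cast; ring
    have he : (((-n:ℤ)*((-n:ℤ)-1)/2).toNat) = n*(n-1)/2 + 1*n := by
      rw [h1', ← cast_T (n+1), Int.toNat_natCast, Nat.add_sub_cancel, Tnat_succ, one_mul]
    rw [he, zpow_neg, zpow_natCast, inv_pow]

lemma Tz_nonneg (n : ℤ) : 0 ≤ n*(n-1)/2 := by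
  apply Int.ediv_nonneg _ (by norm_num)
  rcases le_or_gt 1 n with h | h
  · exact mul_nonneg (by linarith) (by linarith)
  · have h1 : (0:ℤ) ≤ -n := by linarith
    have h2 : (0:ℤ) ≤ 1 - n := by linarith
    nlinarith [mul_nonneg h1 h2]

end JTP

open JTP Finset Filter in
theorem jacobi_triple_product (q x : ℂ) (hq0 : 0 < ‖q‖)
    (hq1 : ‖q‖ < 1) (hx : x ≠ 0) :
    (1 / qp q q) * ∑' n : ℤ, (-1 : ℂ) ^ n * q ^ ((n * (n - 1)) / 2) * x ^ n
      = qp q x * qp q (q / x) := by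
  have hq : q ≠ 0 := by
    intro h; rw [h] at hq0; simp at hq0
  have hq1' : ‖q‖ < 1 := by exact hq1
  have hs : 0 < ‖x‖ := norm_pos_iff.2 hx
  set r := ‖q‖ with hr
  set s := ‖x‖ with hsx
  set K := Real.exp (r/(1-r)) / (Real.exp (-(r/(1-r)^2)))^2 with hK
  have hKpos : 0 < K := by rw [hK]; positivity
  set F : ℕ → ℤ → ℂ := fun m n =>
    if n ∈ Finset.Icc (-(m:ℤ)) (m:ℤ) then
      (-1:ℂ)^n * q^(n*(n-1)/2) * Cq q (2*m) (n+m).toNat * x^n else 0 with hF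
  have hstar : ∀ m : ℕ, qpFin q x m * qpFin q (q/x) m = ∑' n : ℤ, F m n := by
    intro m
    rw [tsum_eq_sum (s := Finset.Icc (-(m:ℤ)) (m:ℤ))
      (fun n hn => by simp only [hF]; rw [if_neg hn])]
    rw [star hq hq1' hx m]
    exact Finset.sum_congr rfl fun n hn => by simp only [hF]; rw [if_pos hn]
  have hlim1 : Tendsto (fun m => qpFin q x m * qpFin q (q/x) m) atTop
      (nhds (qp q x * qp q (q/x))) :=
    (tendsto_qpFin hq1' x).mul (tendsto_qpFin hq1' (q/x))
  have hbound_sum : Summable (fun n : ℤ => K * r^((n*(n-1)/2).toNat) * s^n) :=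
    summable_bound K r s (norm_nonneg q) hq1' hs
  have hterm : ∀ n : ℤ, Tendsto (fun m => F m n) atTop
      (nhds ((qp q q)⁻¹ * ((-1:ℂ)^n * q^(n*(n-1)/2) * x^n))) := by
    intro n
    have h1 : Tendsto (fun m : ℕ => (-1:ℂ)^n * q^(n*(n-1)/2) * Cq q (2*m) (n+m).toNat * x^n)
        atTop (nhds ((-1:ℂ)^n * q^(n*(n-1)/2) * (qp q q)⁻¹ * x^n)) :=
      ((tendsto_Cq hq1' n).const_mul ((-1:ℂ)^n * q^(n*(n-1)/2))).mul_const (x^n)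
    have h2 : ((-1:ℂ)^n * q^(n*(n-1)/2) * (qp q q)⁻¹ * x^n)
        = (qp q q)⁻¹ * ((-1:ℂ)^n * q^(n*(n-1)/2) * x^n) := by ring
    rw [h2] at h1
    apply Filter.Tendsto.congr' _ h1
    filter_upwards [eventually_ge_atTop n.natAbs] with m hm
    simp only [hF]
    rw [if_pos (by simp only [Finset.mem_Icc]; omega)]
  have hnormbound : ∀ᶠ (m:ℕ) in atTop, ∀ n : ℤ,
      ‖F m n‖ ≤ K * r^((n*(n-1)/2).toNat) * s^n := by
    apply Filter.Eventually.of_forall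
    intro m n
    simp only [hF]
    split_ifs with h
    · rw [norm_mul, norm_mul, norm_mul, norm_zpow, norm_zpow, norm_zpow]
      have e1 : ‖(-1:ℂ)‖ = 1 := by norm_num
      rw [e1, one_zpow, one_mul]
      have htz : (0:ℤ) ≤ n*(n-1)/2 := Tz_nonneg n
      have e2 : r^(n*(n-1)/2) = (r^((n*(n-1)/2).toNat) : ℝ) := by
        rw [← zpow_natCast, Int.toNat_of_nonneg htz]
      rw [e2]
      have hC := Cq_norm_le hq1' (2*m) ((n+m).toNat)
      calc r^((n*(n-1)/2).toNat) * ‖Cq q (2*m) ((n+m).toNat)‖ * s^n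
          ≤ r^((n*(n-1)/2).toNat) * K * s^n := by
            apply mul_le_mul_of_nonneg_right
              (mul_le_mul_of_nonneg_left hC (by positivity)) (zpow_nonneg hs.le n)
        _ = K * r^((n*(n-1)/2).toNat) * s^n := by ring
    · rw [norm_zero]
      have hsn : (0:ℝ) < s^n := zpow_pos hs n
      positivity
  have hlim2 : Tendsto (fun m => ∑' n : ℤ, F m n) atTop
      (nhds (∑' n : ℤ, (qp q q)⁻¹ * ((-1:ℂ)^n * q^(n*(n-1)/2) * x^n))) :=
    tendsto_tsum_of_dominated_convergence hbound_sum hterm hnormbound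
  have hfin := tendsto_nhds_unique (hlim1.congr hstar) hlim2
  rw [tsum_mul_left] at hfin
  rw [one_div]
  exact hfin.symm
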